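/- Let G be a graph on n vertices of diameter 2 with centroidal dimension CD(G) = k ≥ 1. Then n ≤ 2^k + k − 1. -/

import Mathlib

open SimpleGraph

/-- A set `B` is a centroidal locating set of `G` if every pair of distinct vertices is
distinguished by the relative distances to two vertices of `B`. -/
def CentroidalLocating {V : Type*} (G : SimpleGraph V) (B : Set V) : Prop :=
  ∀ ⦃x y : V⦄, x ≠ y → ∃ b1 ∈ B, ∃ b2 ∈ B,
    (G.dist x b1 ≤ G.dist x b2 ∧ G.dist y b2 < G.dist y b1) ∨
    (G.dist y b1 ≤ G.dist y b2 ∧ G.dist x b2 < G.dist x b1)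

/-- The centroidal dimension: minimum size of a centroidal locating set. -/
noncomputable def CD {V : Type*} (G : SimpleGraph V) : ℕ :=
  sInf {k | ∃ B : Set V, B.ncard = k ∧ CentroidalLocating G B}

set_option maxHeartbeats 1600000 in
theorem card_le_of_diam_two {V : Type*} [Fintype V] (G : SimpleGraph V)
    (hG : G.Connected) (hdiam : G.diam = 2) (k : ℕ) (hk : CD G = k) (hk1 : 1 ≤ k) :
    Fintype.card V ≤ 2 ^ k + k - 1 := by
  classical
  rcases isEmpty_or_nonempty V with hV | hV
  · simp [Fintype.card_eq_zero]
  have hne : G.ediam ≠ ⊤ := by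
    obtain ⟨u, v, huv⟩ := G.exists_edist_eq_ediam_of_finite
    rw [← huv]
    exact edist_ne_top_iff_reachable.mpr (hG.preconnected u v)
  have hdist2 : ∀ u v : V, G.dist u v ≤ 2 := fun u v => hdiam ▸ G.dist_le_diam hne
  have hmem : k ∈ {k | ∃ B : Set V, B.ncard = k ∧ CentroidalLocating G B} := by
    rw [← hk]
    apply Nat.sInf_mem
    by_contra h
    rw [Set.not_nonempty_iff_eq_empty] at h
    rw [CD, h, Nat.sInf_empty] at hk
    omega
  obtain ⟨B, hBcard, hBloc⟩ := hmem
  set Bf : Finset V := B.toFinset with hBf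
  have hBfcard : Bf.card = k := by rw [← hBcard, hBf, Set.ncard_eq_toFinset_card']
  set S : V → Finset V := fun x => Bf.filter (fun b => G.dist x b = 1) with hSdef
  have hdist12 : ∀ x, x ∉ B → ∀ b ∈ B, G.dist x b = 1 ∨ G.dist x b = 2 := by
    intro x hx b hb
    have h1 : 0 < G.dist x b := hG.pos_dist_of_ne (fun h => hx (h ▸ hb))
    have h2 := hdist2 x b
    omega
  have hmemS : ∀ x b, b ∈ S x ↔ (b ∈ B ∧ G.dist x b = 1) := by
    intro x b
    simp [hSdef, hBf]
  have key : ∀ x ∉ B, ∀ y ∉ B, S x = S y → x = y := by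
    intro x hx y hy hS
    by_contra hxy
    obtain ⟨b1, hb1, b2, hb2, hcase⟩ := hBloc hxy
    have hall : ∀ b ∈ B, G.dist x b = G.dist y b := by
      intro b hb
      have hx' := hdist12 x hx b hb
      have hy' := hdist12 y hy b hb
      have hiff : G.dist x b = 1 ↔ G.dist y b = 1 := by
        have h1 := hmemS x b
        have h2 := hmemS y b
        rw [hS] at h1
        rw [h2] at h1
        tauto
      omega
    rw [hall b1 hb1, hall b2 hb2] at hcase
    omega
  have hBfne : Bf.Nonempty := Finset.card_pos.mp (by omega)
  have hcompl : ∀ y : V, y ∈ Bfᶜ ↔ y ∉ B := by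
    intro y
    simp [hBf]
  have hSmem : ∀ y, S y ∈ Bf.powerset := fun y => Finset.mem_powerset.mpr (Finset.filter_subset _ _)
  have hcount : (Bfᶜ : Finset V).card ≤ 2 ^ k - 1 := by
    by_cases hE : ∃ x ∈ (Bfᶜ : Finset V), S x = ∅
    · obtain ⟨x0, hx0, hx0S⟩ := hE
      have hx0B : x0 ∉ B := (hcompl x0).mp hx0
      have hnoBf : ∀ y ∈ (Bfᶜ : Finset V), S y ≠ Bf := by
        intro y hy hySf
        have hyB : y ∉ B := (hcompl y).mp hy
        have hxy : x0 ≠ y := by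
          intro h
          rw [h, hySf] at hx0S
          exact hBfne.ne_empty hx0S
        obtain ⟨b1, hb1, b2, hb2, hcase⟩ := hBloc hxy
        have hx2 : ∀ b ∈ B, G.dist x0 b = 2 := by
          intro b hb
          have h12 := hdist12 x0 hx0B b hb
          have : b ∉ S x0 := by rw [hx0S]; exact Finset.notMem_empty b
          rw [hmemS] at this
          tauto
        have hy1 : ∀ b ∈ B, G.dist y b = 1 := by
          intro b hb
          have : b ∈ S y := by rw [hySf, hBf]; exact Set.mem_toFinset.mpr hb
          rw [hmemS] at this
          tauto
        rw [hx2 b1 hb1, hx2 b2 hb2, hy1 b1 hb1, hy1 b2 hb2] at hcase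
        omega
      have hle : (Bfᶜ : Finset V).card ≤ (Bf.powerset.erase Bf).card := by
        apply Finset.card_le_card_of_injOn S
        · intro y hy
          exact Finset.mem_erase.mpr ⟨hnoBf y hy, hSmem y⟩
        · intro a ha b hb hab
          exact key a ((hcompl a).mp ha) b ((hcompl b).mp hb) hab
      rw [Finset.card_erase_of_mem (Finset.mem_powerset_self Bf), Finset.card_powerset,
        hBfcard] at hle
      exact hle
    · push_neg at hE
      have hle : (Bfᶜ : Finset V).card ≤ (Bf.powerset.erase ∅).card := by
        apply Finset.card_le_card_of_injOn S
        · intro y hy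
          exact Finset.mem_erase.mpr ⟨(hE y hy).ne_empty, hSmem y⟩
        · intro a ha b hb hab
          exact key a ((hcompl a).mp ha) b ((hcompl b).mp hb) hab
      rw [Finset.card_erase_of_mem (Finset.empty_mem_powerset Bf), Finset.card_powerset,
        hBfcard] at hle
      exact hle
  have htot : Bf.card + (Bfᶜ : Finset V).card = Fintype.card V := Finset.card_add_card_compl Bf
  have h2k : 1 ≤ 2 ^ k := Nat.one_le_two_pow
  omega
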